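/- Let S be a compact connected invariant chain recurrent set of a flow on a compact metric space and let A be a non-empty isolated invariant subset of S with A ≠ S. If A is neither an attractor nor a repeller in S, then there exist points x, y in S \ A with α(x) ⊆ A and ω(y) ⊆ A. -/
import Mathlib


open Filter Topology Set Metric

section Aux

variable {X : Type*} [MetricSpace X] [CompactSpace X]

private lemma flow_cont_x (φ : X → ℝ → X)
    (hcont : Continuous fun p : X × ℝ => φ p.1 p.2) (t : ℝ) :
    Continuous fun x => φ x t :=
  hcont.comp (continuous_id.prodMk continuous_const)

private lemma flow_cont_t (φ : X → ℝ → X)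
    (hcont : Continuous fun p : X × ℝ => φ p.1 p.2) (x : X) :
    Continuous (φ x) :=
  hcont.comp (continuous_const.prodMk continuous_id)

/-- If the forward orbit of `y` stays in the closed set `N`, its ω-limit set is contained
in the maximal invariant subset `A` of `N`. -/
private lemma omega_subset (φ : X → ℝ → X)
    (hcont : Continuous fun p : X × ℝ => φ p.1 p.2)
    (hφ0 : ∀ x, φ x 0 = x) (hφadd : ∀ x s t, φ (φ x s) t = φ x (s + t))
    (N A : Set X) (hNcl : IsClosed N)
    (hAdef : A = {x ∈ N | ∀ t : ℝ, φ x t ∈ N})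
    (y : X) (hy : ∀ t, 0 ≤ t → φ y t ∈ N) :
    (⋂ t ∈ Set.Ioi (0:ℝ), closure (φ y '' Set.Ici t)) ⊆ A := by
  intro z hz
  have hall : ∀ t : ℝ, φ z t ∈ N := by
    intro t
    set m : ℝ := max 1 (-t) with hm
    have hm0 : (0:ℝ) < m := lt_of_lt_of_le one_pos (le_max_left _ _)
    have hz' : z ∈ closure (φ y '' Set.Ici m) := by
      have := Set.mem_iInter₂.1 hz m
      exact this hm0
    obtain ⟨p, hp, hptend⟩ := mem_closure_iff_seq_limit.1 hz'
    have key : ∀ k, φ (p k) t ∈ N := by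
      intro k
      obtain ⟨s, hs, hps⟩ := hp k
      rw [← hps, hφadd]
      have hsm : -t ≤ s := le_trans (le_max_right _ _) hs
      exact hy (s + t) (by linarith)
    have htend : Tendsto (fun k => φ (p k) t) atTop (𝓝 (φ z t)) :=
      ((flow_cont_x φ hcont t).tendsto z).comp hptend
    exact hNcl.mem_of_tendsto htend (Filter.Eventually.of_forall key)
  rw [hAdef]
  refine ⟨?_, hall⟩
  have := hall 0; rwa [hφ0] at this

/-- Key lemma: if no point outside `A` has its entire backward orbit in the isolating
neighbourhood `N`, then `A` is an attractor in `S`. -/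
private lemma main_attractor (φ : X → ℝ → X)
    (hcont : Continuous fun p : X × ℝ => φ p.1 p.2)
    (hφ0 : ∀ x, φ x 0 = x) (hφadd : ∀ x s t, φ (φ x s) t = φ x (s + t))
    (S N U A : Set X)
    (hSinv : ∀ x ∈ S, ∀ t : ℝ, φ x t ∈ S)
    (hNS : N ⊆ S) (hNc : IsCompact N) (hUo : IsOpen U) (hAU : A ⊆ U)
    (hUSN : U ∩ S ⊆ N)
    (hAdef : A = {x ∈ N | ∀ t : ℝ, φ x t ∈ N})
    (hAne : A.Nonempty)
    (hQ : ∀ x ∈ N, (∀ t ≤ (0:ℝ), φ x t ∈ N) → x ∈ A) :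
    ∃ V : Set X, IsOpen V ∧ A ⊆ V ∧
      (⋂ t ∈ Set.Ioi (0:ℝ), closure (⋃ x ∈ V ∩ S, φ x '' Set.Ici t)) = A := by
  have hAN : A ⊆ N := by rw [hAdef]; exact fun x hx => hx.1
  have hAinv : ∀ a ∈ A, ∀ t : ℝ, φ a t ∈ A := by
    intro a ha t
    rw [hAdef] at ha ⊢
    exact ⟨ha.2 t, fun s => by rw [hφadd]; exact ha.2 (t + s)⟩
  have hAcl : IsClosed A := by
    have : A = N ∩ ⋂ t : ℝ, (fun x => φ x t) ⁻¹' N := by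
      rw [hAdef]; ext x; simp [Set.mem_iInter]
    rw [this]
    exact hNc.isClosed.inter (isClosed_iInter fun t =>
      hNc.isClosed.preimage (flow_cont_x φ hcont t))
  have hAcomp : IsCompact A := hAcl.isCompact
  -- Step C': a neighbourhood whose forward S-orbits stay in N
  obtain ⟨V, hVo, hAV, hVfwd⟩ : ∃ V : Set X, IsOpen V ∧ A ⊆ V ∧
      ∀ x ∈ V ∩ S, ∀ t, 0 ≤ t → φ x t ∈ N := by
    by_contra hC
    push_neg at hC
    have hn : ∀ n : ℕ, ∃ x ∈ ({y | Metric.infDist y A < 1/(n+1)} ∩ U) ∩ S,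
        ∃ t, 0 ≤ t ∧ φ x t ∉ N := by
      intro n
      have hVno : IsOpen ({y | Metric.infDist y A < 1/(n+1)} ∩ U) :=
        ((isOpen_lt (Metric.continuous_infDist_pt A) continuous_const)).inter hUo
      have hAVn : A ⊆ {y | Metric.infDist y A < 1/(n+1)} ∩ U := by
        intro a ha
        refine ⟨?_, hAU ha⟩
        show Metric.infDist a A < 1/(n+1)
        rw [Metric.infDist_zero_of_mem ha]
        positivity
      obtain ⟨x, hx, t, ht, hesc⟩ := hC _ hVno hAVn
      exact ⟨x, hx, t, ht, hesc⟩
    choose x hx t ht hesc using hn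
    have hxS : ∀ n, x n ∈ S := fun n => (hx n).2
    have hxU : ∀ n, x n ∈ U := fun n => (hx n).1.2
    have hxN : ∀ n, x n ∈ N := fun n => hUSN ⟨hxU n, hxS n⟩
    have hxd : ∀ n : ℕ, Metric.infDist (x n) A < 1/(n+1) := fun n => (hx n).1.1
    -- escape-time suprema
    set E : ℕ → Set ℝ := fun n => {s | 0 ≤ s ∧ ∀ u, 0 ≤ u → u ≤ s → φ (x n) u ∈ N}
      with hE
    have hE0 : ∀ n, (0:ℝ) ∈ E n := by
      intro n
      refine ⟨le_refl _, fun u h0 h1 => ?_⟩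
      have : u = 0 := le_antisymm h1 h0
      rw [this, hφ0]; exact hxN n
    have hEbdd : ∀ n, BddAbove (E n) := by
      intro n
      refine ⟨t n, fun s hs => ?_⟩
      by_contra hlt
      push_neg at hlt
      exact hesc n (hs.2 (t n) (ht n) hlt.le)
    set s' : ℕ → ℝ := fun n => sSup (E n) with hs'
    have hs0 : ∀ n, 0 ≤ s' n := fun n => le_csSup (hEbdd n) (hE0 n)
    have hseglt : ∀ n, ∀ u, 0 ≤ u → u < s' n → φ (x n) u ∈ N := by
      intro n u h0 hlt
      obtain ⟨sE, hsE, hvs⟩ := exists_lt_of_lt_csSup ⟨0, hE0 n⟩ hlt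
      exact hsE.2 u h0 hvs.le
    have hseg : ∀ n, ∀ u, 0 ≤ u → u ≤ s' n → φ (x n) u ∈ N := by
      intro n u h0 h1
      rcases eq_or_lt_of_le h1 with heq | hlt
      · rw [heq]
        rcases eq_or_lt_of_le (heq ▸ h0) with h00 | h0pos
        · rw [← h00, hφ0]; exact hxN n
        · have hne : Tendsto (φ (x n)) (𝓝[<] (s' n)) (𝓝 (φ (x n) (s' n))) :=
            ((flow_cont_t φ hcont (x n)).tendsto (s' n)).mono_left nhdsWithin_le_nhds
          refine hNc.isClosed.mem_of_tendsto hne ?_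
          have hIoo : Set.Ioo 0 (s' n) ∈ 𝓝[<] (s' n) :=
            Ioo_mem_nhdsLT_of_mem ⟨h0pos, le_refl _⟩
          filter_upwards [hIoo] with v hv
          exact hseglt n v hv.1.le hv.2
      · exact hseglt n u h0 hlt
    set r : ℕ → X := fun n => φ (x n) (s' n) with hr
    have hrN : ∀ n, r n ∈ N := fun n => hseg n (s' n) (hs0 n) (le_refl _)
    have hrU : ∀ n, r n ∉ U := by
      intro n hrUn
      have hopen : IsOpen ((φ (x n)) ⁻¹' U) := hUo.preimage (flow_cont_t φ hcont (x n))
      obtain ⟨ε, hε, hball⟩ := Metric.isOpen_iff.1 hopen (s' n) hrUn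
      have hmem : s' n + ε/2 ∈ E n := by
        refine ⟨by linarith [hs0 n], fun u h0 h1 => ?_⟩
        rcases le_or_gt u (s' n) with hle | hgt
        · exact hseg n u h0 hle
        · have : u ∈ Metric.ball (s' n) ε := by
            simp only [Metric.mem_ball, Real.dist_eq]
            rw [abs_of_pos (by linarith)]
            linarith
          have hU' : φ (x n) u ∈ U := hball this
          exact hUSN ⟨hU', hSinv (x n) (hxS n) u⟩
      have := le_csSup (hEbdd n) hmem
      linarith
    -- the escape times tend to infinity
    have hlong : ∀ T : ℝ, ∃ n₀ : ℕ, ∀ n, n₀ ≤ n → T ≤ s' n := by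
      intro T
      rcases le_or_gt T 0 with hT | hT
      · exact ⟨0, fun n _ => le_trans hT (hs0 n)⟩
      · have hΩ : IsOpen {p : X × ℝ | φ p.1 p.2 ∈ U} := hUo.preimage hcont
        have hsub : A ×ˢ Set.Icc (0:ℝ) T ⊆ {p : X × ℝ | φ p.1 p.2 ∈ U} := by
          rintro ⟨a, u⟩ ⟨ha, _⟩
          exact hAU (hAinv a ha u)
        obtain ⟨W1, W2, hW1o, _, hAW1, hIW2, hWsub⟩ :=
          generalized_tube_lemma hAcomp isCompact_Icc hΩ hsub
        obtain ⟨δ, hδ, hthick⟩ := hAcomp.exists_thickening_subset_open hW1o hAW1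
        obtain ⟨n₀, hn₀⟩ := exists_nat_one_div_lt hδ
        refine ⟨n₀, fun n hn => ?_⟩
        have hxn : x n ∈ W1 := by
          apply hthick
          rw [Metric.mem_thickening_iff_infDist_lt hAne]
          have h1 : (1:ℝ)/(n+1) ≤ 1/(n₀+1) := by
            apply one_div_le_one_div_of_le
            · positivity
            · have : (n₀:ℝ) ≤ n := Nat.cast_le.2 hn
              linarith
          exact lt_of_lt_of_le (hxd n) (le_trans h1 hn₀.le)
        have hTE : T ∈ E n := by
          refine ⟨hT.le, fun u h0 h1 => ?_⟩
          have : (x n, u) ∈ W1 ×ˢ W2 := ⟨hxn, hIW2 ⟨h0, h1⟩⟩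
          have hU' : φ (x n) u ∈ U := hWsub this
          exact hUSN ⟨hU', hSinv (x n) (hxS n) u⟩
        exact le_csSup (hEbdd n) hTE
    -- limit point
    obtain ⟨r₀, hr₀N, σ, hσ, hσtend⟩ := hNc.tendsto_subseq hrN
    have hr₀U : r₀ ∉ U := by
      have : r₀ ∈ Uᶜ := hUo.isClosed_compl.mem_of_tendsto hσtend
        (Filter.Eventually.of_forall fun k => hrU (σ k))
      exact this
    have hr₀back : ∀ u ≤ (0:ℝ), φ r₀ u ∈ N := by
      intro u hu
      have htend : Tendsto (fun k => φ (r (σ k)) u) atTop (𝓝 (φ r₀ u)) :=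
        ((flow_cont_x φ hcont u).tendsto r₀).comp hσtend
      refine hNc.isClosed.mem_of_tendsto htend ?_
      obtain ⟨n₀, hn₀⟩ := hlong (-u)
      rw [Filter.eventually_atTop]
      refine ⟨n₀, fun k hk => ?_⟩
      have hσk : n₀ ≤ σ k := le_trans hk hσ.le_apply
      have hsu : -u ≤ s' (σ k) := hn₀ (σ k) hσk
      show φ (φ (x (σ k)) (s' (σ k))) u ∈ N
      rw [hφadd]
      exact hseg (σ k) (s' (σ k) + u) (by linarith) (by linarith)
    exact hr₀U (hAU (hQ r₀ hr₀N hr₀back))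
  -- V is the desired attractor neighbourhood
  refine ⟨V, hVo, hAV, ?_⟩
  apply Set.Subset.antisymm
  · -- ⊆ A
    intro z hz
    have hall : ∀ t : ℝ, φ z t ∈ N := by
      intro t
      set m : ℝ := max 1 (-t) with hm
      have hm0 : (0:ℝ) < m := lt_of_lt_of_le one_pos (le_max_left _ _)
      have hz' : z ∈ closure (⋃ x ∈ V ∩ S, φ x '' Set.Ici m) :=
        Set.mem_iInter₂.1 hz m hm0
      obtain ⟨p, hp, hptend⟩ := mem_closure_iff_seq_limit.1 hz'
      have key : ∀ k, φ (p k) t ∈ N := by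
        intro k
        have hmem := hp k
        simp only [Set.mem_iUnion, Set.mem_image, Set.mem_Ici] at hmem
        obtain ⟨w, hw, s, hs, hps⟩ := hmem
        rw [← hps, hφadd]
        have hsm : -t ≤ s := le_trans (le_max_right _ _) hs
        exact hVfwd w hw (s + t) (by linarith)
      have htend : Tendsto (fun k => φ (p k) t) atTop (𝓝 (φ z t)) :=
        ((flow_cont_x φ hcont t).tendsto z).comp hptend
      exact hNc.isClosed.mem_of_tendsto htend (Filter.Eventually.of_forall key)
    rw [hAdef]
    refine ⟨?_, hall⟩
    have := hall 0; rwa [hφ0] at this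
  · -- A ⊆
    intro a ha
    apply Set.mem_iInter₂.2
    intro τ hτ
    apply subset_closure
    apply Set.mem_iUnion₂.2
    refine ⟨φ a (-τ), ⟨hAV (hAinv a ha (-τ)), hNS (hAN (hAinv a ha (-τ)))⟩, ?_⟩
    refine ⟨τ, Set.self_mem_Ici, ?_⟩
    rw [hφadd]
    simp [hφ0]

end Aux

private lemma img_neg {X : Type*} (g : ℝ → X) (t : ℝ) :
    (fun s => g (-s)) '' Set.Ici t = g '' Set.Iic (-t) := by
  ext w
  simp only [Set.mem_image, Set.mem_Ici, Set.mem_Iic]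
  constructor
  · rintro ⟨s, hs, rfl⟩; exact ⟨-s, by linarith, rfl⟩
  · rintro ⟨s, hs, rfl⟩; exact ⟨-s, by linarith, by simp⟩

private lemma alpha_transfer {X : Type*} [TopologicalSpace X] (G : ℝ → Set X)
    (F : ℝ → Set X) (hFG : ∀ t : ℝ, F t = G (-t)) :
    (⋂ t ∈ Set.Ioi (0:ℝ), closure (F t)) = ⋂ t ∈ Set.Iio (0:ℝ), closure (G t) := by
  ext z
  simp only [Set.mem_iInter, Set.mem_Ioi, Set.mem_Iio]
  constructor
  · intro h t ht
    have := h (-t) (by linarith)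
    rw [hFG] at this
    simpa using this
  · intro h t ht
    rw [hFG]
    exact h (-t) (by linarith)


/-- Let `S` be a compact, connected, invariant, chain recurrent set of a flow on a compact
metric space and `A ⊊ S` a non-empty isolated invariant subset of `S`. If `A` is neither
an attractor nor a repeller in `S`, then there exist `x, y ∈ S \ A` with `α(x) ⊆ A` and
`ω(y) ⊆ A`. -/
theorem stmt_18 {X : Type*} [MetricSpace X] [CompactSpace X]
    (φ : X → ℝ → X) (hcont : Continuous fun p : X × ℝ => φ p.1 p.2)
    (hφ0 : ∀ x, φ x 0 = x) (hφadd : ∀ x s t, φ (φ x s) t = φ x (s + t))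
    (S : Set X) (hScomp : IsCompact S) (hSconn : IsConnected S)
    (hSinv : ∀ x ∈ S, ∀ t : ℝ, φ x t ∈ S)
    -- chain recurrence of S
    (hchain : ∀ x ∈ S, ∀ 𝒰 : Set (Set X), (∀ U ∈ 𝒰, IsOpen U) → S ⊆ ⋃₀ 𝒰 →
      ∀ T > (0 : ℝ), ∃ (n : ℕ) (xs : ℕ → X) (ts : ℕ → ℝ) (Us : ℕ → Set X),
        0 < n ∧ xs 0 = x ∧ xs n = x ∧ (∃ i ≤ n, xs i ≠ x) ∧
        ∀ i, 1 ≤ i → i ≤ n →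
          Us i ∈ 𝒰 ∧ T ≤ ts i ∧ xs i ∈ Us i ∧ φ (xs (i - 1)) (ts i) ∈ Us i)
    (A : Set X) (hAS : A ⊆ S) (hAne : A.Nonempty) (hAneq : A ≠ S)
    -- A is an isolated invariant set in S
    (hAiso : ∃ N U : Set X, N ⊆ S ∧ IsCompact N ∧ IsOpen U ∧ A ⊆ U ∧ U ∩ S ⊆ N ∧
      A = {x ∈ N | ∀ t : ℝ, φ x t ∈ N})
    -- A is not an attractor in S
    (hnotattr : ¬ ∃ U : Set X, IsOpen U ∧ A ⊆ U ∧
      (⋂ t ∈ Set.Ioi (0 : ℝ), closure (⋃ x ∈ U ∩ S, φ x '' Set.Ici t)) = A)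
    -- A is not a repeller in S
    (hnotrep : ¬ ∃ U : Set X, IsOpen U ∧ A ⊆ U ∧
      (⋂ t ∈ Set.Iio (0 : ℝ), closure (⋃ x ∈ U ∩ S, φ x '' Set.Iic t)) = A) :
    (∃ x ∈ S \ A, (⋂ t ∈ Set.Iio (0 : ℝ), closure (φ x '' Set.Iic t)) ⊆ A) ∧
    (∃ y ∈ S \ A, (⋂ t ∈ Set.Ioi (0 : ℝ), closure (φ y '' Set.Ici t)) ⊆ A) := by
  obtain ⟨N, U, hNS, hNc, hUo, hAU, hUSN, hAdef⟩ := hAiso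
  -- reversed flow
  set ψ : X → ℝ → X := fun x t => φ x (-t) with hψ
  have hψcont : Continuous fun p : X × ℝ => ψ p.1 p.2 :=
    hcont.comp (continuous_fst.prodMk continuous_snd.neg)
  have hψ0 : ∀ x, ψ x 0 = x := by intro x; simp [hψ, hφ0]
  have hψadd : ∀ x s t, ψ (ψ x s) t = ψ x (s + t) := by
    intro x s t; simp only [hψ]; rw [hφadd, neg_add]
  have hψSinv : ∀ x ∈ S, ∀ t : ℝ, ψ x t ∈ S := fun x hx t => hSinv x hx (-t)
  have hψAdef : A = {x ∈ N | ∀ t : ℝ, ψ x t ∈ N} := by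
    rw [hAdef]
    ext w
    simp only [Set.mem_setOf_eq, hψ]
    constructor
    · rintro ⟨h1, h2⟩; exact ⟨h1, fun t => h2 (-t)⟩
    · rintro ⟨h1, h2⟩; exact ⟨h1, fun t => by simpa using h2 (-t)⟩
  -- existence of a point with full backward orbit in N, outside A
  have hQex : ∃ x, x ∈ N ∧ (∀ t ≤ (0:ℝ), φ x t ∈ N) ∧ x ∉ A := by
    by_contra h
    push_neg at h
    obtain ⟨V, hVo, hAV, hVeq⟩ := main_attractor φ hcont hφ0 hφadd S N U A hSinv hNS hNc
      hUo hAU hUSN hAdef hAne (fun x hx hb => h x hx hb)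
    exact hnotattr ⟨V, hVo, hAV, hVeq⟩
  -- existence of a point with full forward orbit in N, outside A
  have hPex : ∃ y, y ∈ N ∧ (∀ t, (0:ℝ) ≤ t → φ y t ∈ N) ∧ y ∉ A := by
    by_contra h
    push_neg at h
    obtain ⟨V, hVo, hAV, hVeq⟩ := main_attractor ψ hψcont hψ0 hψadd S N U A hψSinv hNS hNc
      hUo hAU hUSN hψAdef hAne
      (fun x hx hb => h x hx (fun t ht => by simpa [hψ] using hb (-t) (by linarith)))
    refine hnotrep ⟨V, hVo, hAV, ?_⟩
    rw [← hVeq]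
    symm
    apply alpha_transfer
    intro t
    apply Set.iUnion₂_congr
    intro x hx
    exact img_neg (φ x) t
  constructor
  · obtain ⟨x, hxN, hxback, hxA⟩ := hQex
    refine ⟨x, ⟨hNS hxN, hxA⟩, ?_⟩
    have hsub := omega_subset ψ hψcont hψ0 hψadd N A hNc.isClosed hψAdef x
      (fun t ht => by simpa [hψ] using hxback (-t) (by linarith))
    calc (⋂ t ∈ Set.Iio (0:ℝ), closure (φ x '' Set.Iic t))
        = ⋂ t ∈ Set.Ioi (0:ℝ), closure (ψ x '' Set.Ici t) := by
          symm
          apply alpha_transfer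
          intro t
          exact img_neg (φ x) t
      _ ⊆ A := hsub
  · obtain ⟨y, hyN, hyfwd, hyA⟩ := hPex
    exact ⟨y, ⟨hNS hyN, hyA⟩,
      omega_subset φ hcont hφ0 hφadd N A hNc.isClosed hAdef y hyfwd⟩
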